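/- Let p be a prime, d ≥ 1, and let χ_1,…,χ_d be p-adic characters with Taylor coefficients c_{i,l} = χ_i^{((l))}(1) ∈ ℤ_p at 1. Let M be a nonzero integer and N ≥ 1 an integer such that either 0 ≤ M or M + N ≤ 0, and assume v_p(n) < v_p(M) for every integer n with 1 ≤ n ≤ N−1. Then in ℚ_p: ∑_{M<n_1<⋯<n_d<M+N} χ_1(n_1)⋯χ_d(n_d) = ∑_{l_1,…,l_d ≥ 0} (∏_{i=1}^d M^{l_i}·c_{i,l_i}) · (∑_{0<n_1<⋯<n_d<N} ∏_{i=1}^d χ_i(n_i)·n_i^{−l_i}), and the family on the right-hand side (indexed by (l_1,…,l_d) and the chains (n_1,…,n_d)) is summable in ℚ_p. -/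

import Mathlib

open Finset

/-- The finite set of strictly increasing chains `M < n_1 < ⋯ < n_d < N` of integers. -/
noncomputable def chainsZ (d : ℕ) (M N : ℤ) : Finset (Fin d → ℤ) :=
  (Fintype.piFinset fun _ : Fin d => Finset.Ioo M N).filter
    (fun n => ∀ i j : Fin d, i < j → n i < n j)

section Aux

variable {p : ℕ} [hp : Fact p.Prime]

set_option maxHeartbeats 1000000 in
/-- Finite products of norm-summable families in `ℚ_[p]` indexed by `Fin d → ℕ`. -/
lemma padic_pi_hasSum : ∀ (d : ℕ) (f : Fin d → ℕ → ℚ_[p]),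
    (∀ i, Summable fun l => ‖f i l‖) →
    (Summable fun l : Fin d → ℕ => ‖∏ i, f i (l i)‖) ∧
      HasSum (fun l : Fin d → ℕ => ∏ i, f i (l i)) (∏ i, ∑' l, f i l) := by
  intro d
  induction d with
  | zero =>
    intro f _
    constructor
    · exact .of_finite
    · have h1 : HasSum (fun l : Fin 0 → ℕ => ∏ i, f i (l i))
          ((fun l : Fin 0 → ℕ => ∏ i, f i (l i)) default) :=
        hasSum_single default (fun b hb => absurd (Subsingleton.elim b default) hb)
      simpa using h1
  | succ d ih =>
    intro f hf
    obtain ⟨hs, hh⟩ := ih (fun i => f i.succ) (fun i => hf i.succ)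
    have h0 : Summable fun l => ‖f 0 l‖ := hf 0
    have key : ∀ x : ℕ × (Fin d → ℕ),
        (∏ i, f i ((Fin.cons x.1 x.2 : Fin (d + 1) → ℕ) i)) = f 0 x.1 * ∏ i, f i.succ (x.2 i) := by
      intro x
      rw [Fin.prod_univ_succ, Fin.cons_zero]
      simp [Fin.cons_succ]
    have hnorm2 : Summable fun x : ℕ × (Fin d → ℕ) => ‖f 0 x.1‖ * ‖∏ i, f i.succ (x.2 i)‖ := by
      apply Summable.mul_of_nonneg h0 hs
      · intro l; positivity
      · intro l; positivity
    have hml : Summable fun x : ℕ × (Fin d → ℕ) => ‖f 0 x.1 * ∏ i, f i.succ (x.2 i)‖ :=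
      hnorm2.congr fun x => (norm_mul _ _).symm
    have hhs : HasSum (fun x : ℕ × (Fin d → ℕ) => f 0 x.1 * ∏ i, f i.succ (x.2 i))
        ((∑' l, f 0 l) * ∏ i, ∑' l, f (Fin.succ i) l) :=
      by apply HasSum.mul (h0.of_norm.hasSum) hh hml.of_norm
    set e : ℕ × (Fin d → ℕ) ≃ (Fin (d + 1) → ℕ) := Fin.consEquiv (fun _ => ℕ) with he
    have hcomp : ((fun l : Fin (d + 1) → ℕ => ∏ i, f i (l i)) ∘ e)
        = fun x : ℕ × (Fin d → ℕ) => f 0 x.1 * ∏ i, f i.succ (x.2 i) := by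
      funext x
      simpa [he, Fin.consEquiv] using key x
    constructor
    · rw [← e.summable_iff]
      refine hml.congr fun x => ?_
      simp only [Function.comp]
      rw [show e x = Fin.cons x.1 x.2 from rfl, key x]
    · rw [← e.hasSum_iff, hcomp, Fin.prod_univ_succ]
      exact hhs

lemma padic_norm_div_le (M k : ℤ) (hM : M ≠ 0) (hk : k ≠ 0)
    (h : padicValInt p k < padicValInt p M) :
    ‖(M : ℚ_[p]) / (k : ℚ_[p])‖ ≤ (p : ℝ)⁻¹ := by
  have hM' : (M : ℚ_[p]) ≠ 0 := Int.cast_ne_zero.2 hM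
  have hk' : (k : ℚ_[p]) ≠ 0 := Int.cast_ne_zero.2 hk
  have hp1 : (1 : ℝ) < p := by exact_mod_cast hp.out.one_lt
  rw [norm_div, Padic.norm_eq_zpow_neg_valuation hM', Padic.norm_eq_zpow_neg_valuation hk',
    Padic.valuation_intCast, Padic.valuation_intCast,
    ← zpow_sub₀ (by positivity : (p : ℝ) ≠ 0)]
  calc (p : ℝ) ^ (-(padicValInt p M : ℤ) - -(padicValInt p k : ℤ))
      ≤ (p : ℝ) ^ (-1 : ℤ) := by
        apply zpow_le_zpow_right₀ hp1.le; omega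
    _ = (p : ℝ)⁻¹ := zpow_neg_one _

end Aux

/-- Translation of upper bounds for multiple harmonic sums attached to `p`-adic characters:
if `χ_1,…,χ_d` are `p`-adic characters (multiplicative on nonzero elements, nonvanishing,
analytic on the closed disk of radius `1/p` around `1` with Taylor coefficients `c_{i,l} ∈ ℤ_p`),
`M ≠ 0`, `N ≥ 1`, `0 ≤ M` or `M + N ≤ 0`, and `v_p(n) < v_p(M)` for `1 ≤ n ≤ N − 1`, then
`H_{M<M+N}(χ_d,…,χ_1) = ∑_{l_1,…,l_d ≥ 0} (∏ M^{l_i} c_{i,l_i}) · H_N(χ_d ψ_{l_d},…,χ_1 ψ_{l_1})`,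
the whole family (indexed by the `l`'s and the chains) being summable. -/
theorem mhs_translation_padic (p : ℕ) [Fact p.Prime] (d : ℕ) (hd : 1 ≤ d)
    (χ : Fin d → ℚ_[p] → ℚ_[p]) (c : Fin d → ℕ → ℤ_[p])
    (hmul : ∀ i : Fin d, ∀ x y : ℚ_[p], x ≠ 0 → y ≠ 0 → χ i (x * y) = χ i x * χ i y)
    (hne : ∀ i : Fin d, ∀ x : ℚ_[p], x ≠ 0 → χ i x ≠ 0)
    (htaylor : ∀ i : Fin d, ∀ x : ℚ_[p], ‖x‖ ≤ (p : ℝ)⁻¹ →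
      HasSum (fun l : ℕ => (c i l : ℚ_[p]) * x ^ l) (χ i (1 + x)))
    (M N : ℤ) (hM0 : M ≠ 0) (hN : 1 ≤ N) (hside : 0 ≤ M ∨ M + N ≤ 0)
    (hval : ∀ n : ℤ, 1 ≤ n → n ≤ N - 1 → padicValInt p n < padicValInt p M) :
    Summable (fun x : (Fin d → ℕ) × {n : Fin d → ℤ // n ∈ chainsZ d 0 N} =>
        (∏ i, (M : ℚ_[p]) ^ (x.1 i) * (c i (x.1 i) : ℚ_[p])) *
          ∏ i, χ i ((x.2.1 i : ℚ_[p])) * ((x.2.1 i : ℚ_[p])) ^ (-(x.1 i : ℤ))) ∧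
    (∑ n ∈ chainsZ d M (M + N), ∏ i, χ i ((n i : ℚ_[p])))
      = ∑' l : Fin d → ℕ,
          (∏ i, (M : ℚ_[p]) ^ (l i) * (c i (l i) : ℚ_[p])) *
            ∑ n ∈ chainsZ d 0 N, ∏ i, χ i ((n i : ℚ_[p])) * ((n i : ℚ_[p])) ^ (-(l i : ℤ)) := by
  have hp1 : (1 : ℝ) < p := by exact_mod_cast (Fact.out : p.Prime).one_lt
  -- membership characterizations
  have memC : ∀ (A B : ℤ) (n : Fin d → ℤ), n ∈ chainsZ d A B ↔
      (∀ j, A < n j ∧ n j < B) ∧ ∀ i j : Fin d, i < j → n i < n j := by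
    intro A B n
    simp [chainsZ, Fintype.mem_piFinset, Finset.mem_Ioo, Finset.mem_filter]
  -- the common summand family
  set G : (Fin d → ℤ) → (Fin d → ℕ) → ℚ_[p] := fun n l =>
    (∏ i, (M : ℚ_[p]) ^ (l i) * (c i (l i) : ℚ_[p])) *
      ∏ i, χ i ((n i : ℚ_[p])) * ((n i : ℚ_[p])) ^ (-(l i : ℤ)) with hG
  -- per-chain analysis
  have main : ∀ n : Fin d → ℤ, n ∈ chainsZ d 0 N →
      (Summable fun l : Fin d → ℕ => ‖G n l‖) ∧ Summable (G n) ∧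
        (∏ i, χ i (((n i + M : ℤ) : ℚ_[p]))) = ∑' l, G n l := by
    intro n hn
    have hfact : ∀ i, 0 < n i ∧ n i < N := ((memC 0 N n).1 hn).1
    have hk0 : ∀ i, ((n i : ℚ_[p])) ≠ 0 := fun i =>
      Int.cast_ne_zero.2 (by have := (hfact i).1; omega)
    set x : Fin d → ℚ_[p] := fun i => (M : ℚ_[p]) / (n i : ℚ_[p]) with hx
    have hdiv : ∀ i, ‖x i‖ ≤ (p : ℝ)⁻¹ := by
      intro i
      exact padic_norm_div_le M (n i) hM0 (by have := (hfact i).1; omega)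
        (hval (n i) (by have := (hfact i).1; omega) (by have := (hfact i).2; omega))
    set f : Fin d → ℕ → ℚ_[p] := fun i l => (c i l : ℚ_[p]) * x i ^ l with hf
    have hnorms : ∀ i, Summable fun l => ‖f i l‖ := by
      intro i
      refine Summable.of_nonneg_of_le (fun l => norm_nonneg _) (fun l => ?_)
        (summable_geometric_of_lt_one (by positivity) (inv_lt_one_of_one_lt₀ hp1))
      rw [hf]
      calc ‖(c i l : ℚ_[p]) * x i ^ l‖ = ‖(c i l : ℚ_[p])‖ * ‖x i‖ ^ l := by
            rw [norm_mul, norm_pow]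
        _ ≤ 1 * ((p : ℝ)⁻¹) ^ l :=
            mul_le_mul (c i l).norm_le_one
              (pow_le_pow_left₀ (norm_nonneg _) (hdiv i) l) (by positivity) zero_le_one
        _ = ((p : ℝ)⁻¹) ^ l := one_mul _
    obtain ⟨hSn, hHn⟩ := padic_pi_hasSum d f hnorms
    -- key algebraic identity
    have hid : ∀ l : Fin d → ℕ,
        G n l = (∏ i, χ i ((n i : ℚ_[p]))) * ∏ i, f i (l i) := by
      intro l
      rw [hG]
      simp only
      rw [← Finset.prod_mul_distrib, ← Finset.prod_mul_distrib]
      refine Finset.prod_congr rfl fun i _ => ?_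
      rw [hf]
      simp only
      rw [hx]
      simp only
      rw [zpow_neg, zpow_natCast, div_pow, div_eq_mul_inv]
      ring
    have hGs : Summable (G n) :=
      ((hSn.of_norm.mul_left (∏ i, χ i ((n i : ℚ_[p]))))).congr fun l => (hid l).symm
    refine ⟨?_, hGs, ?_⟩
    · refine (hSn.mul_left ‖∏ i, χ i ((n i : ℚ_[p]))‖).congr fun l => ?_
      rw [← norm_mul, ← hid l]
    · have h1x : ∀ i, (1 : ℚ_[p]) + x i ≠ 0 := by
        intro i h
        have hxi : x i = -1 := eq_neg_of_add_eq_zero_right h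
        have : ‖x i‖ = 1 := by rw [hxi, norm_neg, norm_one]
        have hlt : ‖x i‖ < 1 := lt_of_le_of_lt (hdiv i) (inv_lt_one_of_one_lt₀ hp1)
        rw [this] at hlt; exact lt_irrefl _ hlt
      have e1 : ∀ i, (((n i + M : ℤ) : ℚ_[p])) = (n i : ℚ_[p]) * (1 + x i) := by
        intro i
        push_cast
        rw [hx]
        simp only
        rw [mul_add, mul_one, mul_div_cancel₀ _ (hk0 i)]
      calc (∏ i, χ i (((n i + M : ℤ) : ℚ_[p])))
          = ∏ i, (χ i ((n i : ℚ_[p])) * χ i (1 + x i)) := by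
            refine Finset.prod_congr rfl fun i _ => ?_
            rw [e1 i, hmul i _ _ (hk0 i) (h1x i)]
        _ = (∏ i, χ i ((n i : ℚ_[p]))) * ∏ i, χ i (1 + x i) := Finset.prod_mul_distrib
        _ = (∏ i, χ i ((n i : ℚ_[p]))) * ∑' l : Fin d → ℕ, ∏ i, f i (l i) := by
            congr 1
            rw [hHn.tsum_eq]
            refine Finset.prod_congr rfl fun i _ => ?_
            exact ((htaylor i (x i) (hdiv i)).tsum_eq).symm
        _ = ∑' l : Fin d → ℕ, (∏ i, χ i ((n i : ℚ_[p]))) * ∏ i, f i (l i) := by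
            rw [tsum_mul_left]
        _ = ∑' l, G n l := tsum_congr fun l => (hid l).symm
  constructor
  · -- summability of the big family
    apply Summable.of_norm
    rw [summable_prod_of_nonneg (fun _ => norm_nonneg _)]
    constructor
    · intro l
      exact .of_finite
    · refine Summable.congr ?_ (fun l => (tsum_fintype _).symm)
      refine summable_sum (s := Finset.univ)
        (f := fun (b : {n : Fin d → ℤ // n ∈ chainsZ d 0 N}) (l : Fin d → ℕ) =>
          ‖G b.1 l‖) fun b _ => (main b.1 b.2).1
  · -- the identity
    have step1 : (∑ n ∈ chainsZ d M (M + N), ∏ i, χ i ((n i : ℚ_[p])))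
        = ∑ n ∈ chainsZ d 0 N, ∏ i, χ i (((n i + M : ℤ) : ℚ_[p])) := by
      refine Finset.sum_nbij' (i := fun n => fun j => n j - M) (j := fun n => fun j => n j + M)
        ?_ ?_ ?_ ?_ ?_
      · intro a ha
        rw [memC] at ha ⊢
        refine ⟨fun j => ?_, fun i j h => ?_⟩
        · have := ha.1 j; omega
        · have := ha.2 i j h; omega
      · intro a ha
        rw [memC] at ha ⊢
        refine ⟨fun j => ?_, fun i j h => ?_⟩
        · have := ha.1 j; omega
        · have := ha.2 i j h; omega
      · intro a _; funext j; ring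
      · intro a _; funext j; ring
      · intro a _
        refine Finset.prod_congr rfl fun i _ => ?_
        congr 1
        push_cast
        ring
    rw [step1]
    calc ∑ n ∈ chainsZ d 0 N, ∏ i, χ i (((n i + M : ℤ) : ℚ_[p]))
        = ∑ n ∈ chainsZ d 0 N, ∑' l, G n l :=
          Finset.sum_congr rfl fun n hn => (main n hn).2.2
      _ = ∑' l, ∑ n ∈ chainsZ d 0 N, G n l :=
          (Summable.tsum_finsetSum fun n hn => (main n hn).2.1).symm
      _ = ∑' l : Fin d → ℕ,
          (∏ i, (M : ℚ_[p]) ^ (l i) * (c i (l i) : ℚ_[p])) *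
            ∑ n ∈ chainsZ d 0 N, ∏ i, χ i ((n i : ℚ_[p])) * ((n i : ℚ_[p])) ^ (-(l i : ℤ)) := by
          refine tsum_congr fun l => ?_
          rw [hG, ← Finset.mul_sum]
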